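/- (Isbell; group case) Let 𝒱 be a variety of groups with instances of nontrivial dominions. Then there exist a finitely generated group G ∈ 𝒱 and a finitely generated subgroup H of G such that H is strictly contained in dom_G^𝒱(H). -/

import Mathlib

/-- A bundled group: a type in universe `u` together with a group structure. -/
structure GroupT : Type (u + 1) where
  carrier : Type u
  [str : Group carrier]

attribute [instance] GroupT.str

/-- A variety of groups: a class of groups closed under isomorphism, subgroups,
homomorphic images, and arbitrary direct products indexed by types in the universe. -/
structure GroupVariety : Type (u + 1) where
  Mem : GroupT.{u} → Prop
  iso_closed : ∀ {G H : GroupT.{u}}, G.carrier ≃* H.carrier → Mem G → Mem H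
  subgroup_closed : ∀ (G : GroupT.{u}) (H : Subgroup G.carrier), Mem G → Mem ⟨H⟩
  quotient_closed : ∀ (G H : GroupT.{u}) (f : G.carrier →* H.carrier),
      Function.Surjective f → Mem G → Mem H
  pi_closed : ∀ (ι : Type u) (f : ι → GroupT.{u}),
      (∀ i, Mem (f i)) → Mem ⟨∀ i, (f i).carrier⟩

/-- A variety is nontrivial if it contains some nontrivial group and
does not contain all groups. -/
def GroupVariety.IsNontrivial (V : GroupVariety.{u}) : Prop :=
  (∃ G : GroupT.{u}, V.Mem G ∧ Nontrivial G.carrier) ∧ ∃ G : GroupT.{u}, ¬ V.Mem G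

/-- The dominion of a subgroup `H` of `G` relative to a class `C` of groups:
all elements of `G` on which any two homomorphisms into a `C`-group agreeing on `H`
must agree. -/
def dominion (C : GroupT.{u} → Prop) (G : Type u) [Group G] (H : Subgroup G) : Set G :=
  {a | ∀ K : GroupT.{u}, C K → ∀ f g : G →* K.carrier, (∀ h ∈ H, f h = g h) → f a = g a}

/-- The product variety `𝒩𝒬`: the class of groups having a normal subgroup in `𝒩`
with quotient in `𝒬`. -/
def ProductVariety (N Q : GroupVariety.{u}) (G : GroupT.{u}) : Prop :=
  ∃ (M : Subgroup G.carrier) (h : M.Normal),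
    N.Mem ⟨M⟩ ∧ (letI := h; Q.Mem ⟨G.carrier ⧸ M⟩)

/-- The verbal subgroup `𝒬(G)`: the intersection of all normal subgroups of `G`
whose quotient lies in `𝒬`. -/
def verbalSubgroup (Q : GroupVariety.{u}) (G : Type u) [Group G] : Subgroup G :=
  ⨅ M ∈ {M : Subgroup G | ∃ h : M.Normal, (letI := h; Q.Mem ⟨G ⧸ M⟩)}, M

/-- A class of groups has instances of nontrivial dominions if there is a group `G`
in the class and a subgroup `H` of `G` strictly contained in its dominion in `G`. -/
def HasNontrivialDominions (C : GroupT.{u} → Prop) : Prop :=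
  ∃ (G : GroupT.{u}) (H : Subgroup G.carrier),
    C G ∧ (H : Set G.carrier) ⊂ dominion C G.carrier H

universe u

namespace IsbellAux

open FreeGroup Subgroup

variable (V : GroupVariety.{u})

theorem mem_verbal {G : Type u} [Group G] {x : G} :
    x ∈ verbalSubgroup V G ↔ ∀ M : Subgroup G,
      M ∈ {M : Subgroup G | ∃ h : M.Normal, (letI := h; V.Mem ⟨G ⧸ M⟩)} → x ∈ M := by
  simp [verbalSubgroup, Subgroup.mem_iInf]

instance verbal_normal (G : Type u) [Group G] : (verbalSubgroup V G).Normal := by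
  constructor
  intro n hn g
  rw [mem_verbal] at hn ⊢
  rintro M hM
  obtain ⟨hnorm, hq⟩ := hM
  exact hnorm.conj_mem _ (hn M ⟨hnorm, hq⟩) g

theorem verbal_le_of_mem {G : Type u} [Group G] {M : Subgroup G} (h : M.Normal)
    (hq : letI := h; V.Mem ⟨G ⧸ M⟩) : verbalSubgroup V G ≤ M :=
  fun _ hx => (mem_verbal V).1 hx M ⟨h, hq⟩

theorem mem_quot_ker {P : Type u} [Group P] {Kt : GroupT.{u}} (hK : V.Mem Kt)
    (φ : P →* Kt.carrier) : V.Mem ⟨P ⧸ φ.ker⟩ := by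
  have h1 : V.Mem ⟨φ.range⟩ := V.subgroup_closed Kt φ.range hK
  exact V.iso_closed (QuotientGroup.quotientKerEquivRange φ).symm h1

theorem verbal_le_ker {P : Type u} [Group P] {Kt : GroupT.{u}} (hK : V.Mem Kt)
    (φ : P →* Kt.carrier) : verbalSubgroup V P ≤ φ.ker :=
  verbal_le_of_mem V inferInstance (mem_quot_ker V hK φ)

theorem map_verbal_le {P D : Type u} [Group P] [Group D] (ψ : P →* D) :
    Subgroup.map ψ (verbalSubgroup V P) ≤ verbalSubgroup V D := by
  rw [Subgroup.map_le_iff_le_comap]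
  intro x hx
  rw [Subgroup.mem_comap, mem_verbal V]
  rintro M ⟨hnorm, hq⟩
  letI := hnorm
  have hle : verbalSubgroup V P ≤ ((QuotientGroup.mk' M).comp ψ).ker :=
    verbal_le_ker V (Kt := ⟨D ⧸ M⟩) hq _
  have := hle hx
  simpa [MonoidHom.mem_ker, QuotientGroup.eq_one_iff] using this

end IsbellAux

namespace IsbellAux

open FreeGroup Subgroup

variable (V : GroupVariety.{u})

theorem verbal_eq_bot {Kt : GroupT.{u}} (hK : V.Mem Kt) :
    verbalSubgroup V Kt.carrier = ⊥ := by
  have h := verbal_le_ker V hK (MonoidHom.id Kt.carrier)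
  simpa using h

theorem quot_verbal_mem (F : Type u) [Group F] : V.Mem ⟨F ⧸ verbalSubgroup V F⟩ := by
  classical
  set s := {M : Subgroup F | ∃ h : M.Normal, (letI := h; V.Mem ⟨F ⧸ M⟩)} with hs
  letI instGrp : ∀ M : s, Group (F ⧸ M.1) := fun M => letI := M.2.choose; inferInstance
  let fam : s → GroupT.{u} := fun M => @GroupT.mk (F ⧸ M.1) (instGrp M)
  have hfam : ∀ M : s, V.Mem (fam M) := fun M => M.2.choose_spec
  have hpi : V.Mem ⟨∀ M : s, F ⧸ M.1⟩ := V.pi_closed _ fam hfam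
  let Φ : F →* ∀ M : s, F ⧸ M.1 :=
    { toFun := fun x M => QuotientGroup.mk x
      map_one' := by funext M; rfl
      map_mul' := by intro x y; funext M; rfl }
  have hker : Φ.ker = verbalSubgroup V F := by
    ext x
    rw [mem_verbal V]
    simp only [MonoidHom.mem_ker, funext_iff, Pi.one_apply]
    constructor
    · intro hx M hM
      have h1 := hx ⟨M, hM⟩
      letI := hM.choose
      exact (QuotientGroup.eq_one_iff x).1 h1
    · intro hx M
      letI := M.2.choose
      exact (QuotientGroup.eq_one_iff x).2 (hx M.1 M.2)
  have e : (F ⧸ verbalSubgroup V F) ≃* Φ.range :=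
    (QuotientGroup.quotientMulEquivOfEq hker.symm).trans (QuotientGroup.quotientKerEquivRange Φ)
  exact V.iso_closed e.symm (V.subgroup_closed _ Φ.range hpi)

theorem quot_mem_of_verbal_le {F : Type u} [Group F] {N : Subgroup F} [hN : N.Normal]
    (h : verbalSubgroup V F ≤ N) : V.Mem ⟨F ⧸ N⟩ := by
  have hmap : Function.Surjective
      (QuotientGroup.map (verbalSubgroup V F) N (MonoidHom.id F) (by simpa using h)) := by
    intro q
    obtain ⟨x, rfl⟩ := QuotientGroup.mk_surjective q
    exact ⟨QuotientGroup.mk x, by simp [QuotientGroup.map_mk]⟩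
  exact V.quotient_closed ⟨F ⧸ verbalSubgroup V F⟩ ⟨F ⧸ N⟩ _ hmap (quot_verbal_mem V F)

end IsbellAux

namespace IsbellAux

open FreeGroup Subgroup

variable (V : GroupVariety.{u})

/-- Multiplication relators for the two copies of `G`. -/
def Rel (G : Type u) [Group G] : Set (FreeGroup (G ⊕ G)) :=
  {w | ∃ x y : G, w = of (Sum.inl x) * of (Sum.inl y) * (of (Sum.inl (x * y)))⁻¹ ∨
       w = of (Sum.inr x) * of (Sum.inr y) * (of (Sum.inr (x * y)))⁻¹}

/-- Amalgamation relators identifying the two copies of `H`. -/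
def SRel (G : Type u) [Group G] (H : Subgroup G) : Set (FreeGroup (G ⊕ G)) :=
  {w | ∃ h ∈ H, w = of (Sum.inl h) * (of (Sum.inr h))⁻¹}

def bigK (G : Type u) [Group G] (H : Subgroup G) : Subgroup (FreeGroup (G ⊕ G)) :=
  normalClosure (Rel G ∪ SRel G H) ⊔ verbalSubgroup V (FreeGroup (G ⊕ G))

instance bigK_normal (G : Type u) [Group G] (H : Subgroup G) : (bigK V G H).Normal :=
  Subgroup.sup_normal _ _

theorem mem_dominion_of_bigK {G : Type u} [Group G] {H : Subgroup G} {a : G}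
    (hw : of (Sum.inl a) * (of (Sum.inr a))⁻¹ ∈ bigK V G H) :
    a ∈ dominion V.Mem G H := by
  intro Kt hK f g hfg
  let φ : FreeGroup (G ⊕ G) →* Kt.carrier := FreeGroup.lift (Sum.elim f g)
  have hker : bigK V G H ≤ φ.ker := by
    rw [bigK]
    apply sup_le
    · apply normalClosure_le_normal
      rintro w (⟨x, y, h | h⟩ | ⟨h', hh, rfl⟩)
      · subst h
        simp only [SetLike.mem_coe, MonoidHom.mem_ker, _root_.map_mul, _root_.map_inv, φ,
          FreeGroup.lift_apply_of, Sum.elim_inl]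
        group
      · subst h
        simp only [SetLike.mem_coe, MonoidHom.mem_ker, _root_.map_mul, _root_.map_inv, φ,
          FreeGroup.lift_apply_of, Sum.elim_inr]
        group
      · simp only [SetLike.mem_coe, MonoidHom.mem_ker, _root_.map_mul, _root_.map_inv, φ,
          FreeGroup.lift_apply_of, Sum.elim_inl, Sum.elim_inr]
        rw [hfg h' hh]; group
    · exact verbal_le_ker V hK φ
  have h1 : φ (of (Sum.inl a) * (of (Sum.inr a))⁻¹) = 1 := hker hw
  simp only [_root_.map_mul, _root_.map_inv, φ, FreeGroup.lift_apply_of, Sum.elim_inl,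
    Sum.elim_inr] at h1
  exact mul_inv_eq_one.1 h1

theorem bigK_of_mem_dominion {G : Type u} [Group G] {H : Subgroup G} {a : G}
    (ha : a ∈ dominion V.Mem G H) :
    of (Sum.inl a) * (of (Sum.inr a))⁻¹ ∈ bigK V G H := by
  set N := bigK V G H with hNdef
  have hnorm : N.Normal := bigK_normal V G H
  have hQ : V.Mem ⟨FreeGroup (G ⊕ G) ⧸ N⟩ := quot_mem_of_verbal_le V le_sup_right
  have hrel : ∀ w ∈ Rel G ∪ SRel G H, w ∈ N := fun w hw =>
    (le_sup_left : normalClosure (Rel G ∪ SRel G H) ≤ N) (subset_normalClosure hw)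
  let lam : G →* FreeGroup (G ⊕ G) ⧸ N := MonoidHom.mk'
    (fun x => QuotientGroup.mk (of (Sum.inl x))) (by
      intro x y
      rw [eq_comm, ← QuotientGroup.mk_mul, QuotientGroup.eq]
      have hr : of (Sum.inl x) * of (Sum.inl y) * (of (Sum.inl (x * y)))⁻¹ ∈ N :=
        hrel _ (Or.inl ⟨x, y, Or.inl rfl⟩)
      have h2 := hnorm.conj_mem _ (inv_mem hr) (of (Sum.inl x) * of (Sum.inl y))⁻¹
      have heq : ((of (Sum.inl x) : FreeGroup (G ⊕ G)) * of (Sum.inl y))⁻¹ *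
          (of (Sum.inl x) * of (Sum.inl y) * (of (Sum.inl (x * y)))⁻¹)⁻¹ *
          (of (Sum.inl x) * of (Sum.inl y))⁻¹⁻¹ =
          (of (Sum.inl x) * of (Sum.inl y))⁻¹ * of (Sum.inl (x * y)) := by group
      rwa [heq] at h2)
  let rho : G →* FreeGroup (G ⊕ G) ⧸ N := MonoidHom.mk'
    (fun x => QuotientGroup.mk (of (Sum.inr x))) (by
      intro x y
      rw [eq_comm, ← QuotientGroup.mk_mul, QuotientGroup.eq]
      have hr : of (Sum.inr x) * of (Sum.inr y) * (of (Sum.inr (x * y)))⁻¹ ∈ N :=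
        hrel _ (Or.inl ⟨x, y, Or.inr rfl⟩)
      have h2 := hnorm.conj_mem _ (inv_mem hr) (of (Sum.inr x) * of (Sum.inr y))⁻¹
      have heq : ((of (Sum.inr x) : FreeGroup (G ⊕ G)) * of (Sum.inr y))⁻¹ *
          (of (Sum.inr x) * of (Sum.inr y) * (of (Sum.inr (x * y)))⁻¹)⁻¹ *
          (of (Sum.inr x) * of (Sum.inr y))⁻¹⁻¹ =
          (of (Sum.inr x) * of (Sum.inr y))⁻¹ * of (Sum.inr (x * y)) := by group
      rwa [heq] at h2)
  have hagree : ∀ h ∈ H, lam h = rho h := by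
    intro h hh
    show QuotientGroup.mk (of (Sum.inl h)) = QuotientGroup.mk (of (Sum.inr h))
    rw [QuotientGroup.eq]
    have hs : of (Sum.inl h) * (of (Sum.inr h))⁻¹ ∈ N := hrel _ (Or.inr ⟨h, hh, rfl⟩)
    have h2 := hnorm.conj_mem _ (inv_mem hs) (of (Sum.inl h))⁻¹
    have heq : ((of (Sum.inl h) : FreeGroup (G ⊕ G)))⁻¹ * (of (Sum.inl h) * (of (Sum.inr h))⁻¹)⁻¹ *
        (of (Sum.inl h))⁻¹⁻¹ = (of (Sum.inl h))⁻¹ * of (Sum.inr h) := by group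
    rwa [heq] at h2
  have hla : lam a = rho a := ha ⟨FreeGroup (G ⊕ G) ⧸ N⟩ hQ lam rho hagree
  have h3 : (of (Sum.inl a))⁻¹ * of (Sum.inr a) ∈ N := (QuotientGroup.eq).1 hla
  have h4 := hnorm.conj_mem _ (inv_mem h3) (of (Sum.inl a))
  have heq : (of (Sum.inl a) : FreeGroup (G ⊕ G)) * ((of (Sum.inl a))⁻¹ * of (Sum.inr a))⁻¹ *
      (of (Sum.inl a))⁻¹ = of (Sum.inl a) * (of (Sum.inr a))⁻¹ := by group
  rwa [heq] at h4

end IsbellAux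

namespace IsbellAux

open FreeGroup Subgroup

variable (V : GroupVariety.{u})

/-- Functorial map on doubled free groups. -/
def fgm {A B : Type u} [Group A] [Group B] (φ : A →* B) :
    FreeGroup (A ⊕ A) →* FreeGroup (B ⊕ B) :=
  FreeGroup.map (Sum.map φ φ)

theorem fgm_of_inl {A B : Type u} [Group A] [Group B] (φ : A →* B) (x : A) :
    fgm φ (of (Sum.inl x)) = of (Sum.inl (φ x)) := by simp [fgm, map.of]

theorem fgm_of_inr {A B : Type u} [Group A] [Group B] (φ : A →* B) (x : A) :
    fgm φ (of (Sum.inr x)) = of (Sum.inr (φ x)) := by simp [fgm, map.of]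

theorem fgm_comp {A B C : Type u} [Group A] [Group B] [Group C] (ψ : B →* C) (φ : A →* B) :
    (fgm ψ).comp (fgm φ) = fgm (ψ.comp φ) := by
  apply FreeGroup.ext_hom
  rintro (x | x) <;> simp [fgm, map.of]

theorem map_bigK_le {A B : Type u} [Group A] [Group B] (φ : A →* B)
    {HA : Subgroup A} {HB : Subgroup B} (hH : ∀ x ∈ HA, φ x ∈ HB) :
    Subgroup.map (fgm φ) (bigK V A HA) ≤ bigK V B HB := by
  rw [bigK, bigK, Subgroup.map_sup]
  apply sup_le
  · have h1 : Subgroup.map (fgm φ) (normalClosure (Rel A ∪ SRel A HA)) ≤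
        Subgroup.normalClosure ((fgm φ) '' (Rel A ∪ SRel A HA)) := by
      rw [Subgroup.map_le_iff_le_comap]
      apply normalClosure_le_normal
      intro x hx
      exact subset_normalClosure (Set.mem_image_of_mem _ hx)
    refine h1.trans (le_trans (normalClosure_mono ?_) le_sup_left)
    rintro w ⟨v, hv | hv, rfl⟩
    · obtain ⟨x, y, h | h⟩ := hv <;> subst h
      · exact Or.inl ⟨φ x, φ y, Or.inl (by
          simp only [_root_.map_mul, _root_.map_inv, fgm_of_inl, _root_.map_mul φ])⟩
      · exact Or.inl ⟨φ x, φ y, Or.inr (by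
          simp only [_root_.map_mul, _root_.map_inv, fgm_of_inr, _root_.map_mul φ])⟩
    · obtain ⟨h', hh, rfl⟩ := hv
      exact Or.inr ⟨φ h', hH h' hh, by
        simp only [_root_.map_mul, _root_.map_inv, fgm_of_inl, fgm_of_inr]⟩
  · exact (map_verbal_le V (fgm φ)).trans le_sup_right

variable (G : Type u) [Group G] (H : Subgroup G)

/-- Index type: pairs of finitely generated subgroups, the second contained in `H`. -/
abbrev Idx : Type u := {p : Subgroup G × Subgroup G // p.1.FG ∧ p.2.FG ∧ p.2 ≤ H}

theorem fg_bot' : (⊥ : Subgroup G).FG :=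
  (Subgroup.fg_iff _).2 ⟨∅, by simp, Set.finite_empty⟩

theorem fg_sup' {A B : Subgroup G} (hA : A.FG) (hB : B.FG) : (A ⊔ B).FG := by
  rw [Subgroup.fg_iff] at hA hB ⊢
  obtain ⟨S, hS, hSf⟩ := hA
  obtain ⟨T, hT, hTf⟩ := hB
  exact ⟨S ∪ T, by rw [Subgroup.closure_union, hS, hT], hSf.union hTf⟩

instance : Nonempty (Idx G H) := ⟨⟨(⊥, ⊥), fg_bot' G, fg_bot' G, bot_le⟩⟩

variable {G H}

def idxSup (p q : Idx G H) : Idx G H :=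
  ⟨(p.1.1 ⊔ q.1.1, p.1.2 ⊔ q.1.2), fg_sup' G p.2.1 q.2.1, fg_sup' G p.2.2.1 q.2.2.1,
    sup_le p.2.2.2 q.2.2.2⟩

theorem le_idxSup_left (p q : Idx G H) : p ≤ idxSup p q := ⟨le_sup_left, le_sup_left⟩
theorem le_idxSup_right (p q : Idx G H) : q ≤ idxSup p q := ⟨le_sup_right, le_sup_right⟩

def jmap (p : Idx G H) : FreeGroup (↥p.1.1 ⊕ ↥p.1.1) →* FreeGroup (G ⊕ G) :=
  fgm p.1.1.subtype

def Kp (p : Idx G H) : Subgroup (FreeGroup (↥p.1.1 ⊕ ↥p.1.1)) :=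
  bigK V ↥p.1.1 (Subgroup.comap p.1.1.subtype p.1.2)

def Mfam (p : Idx G H) : Subgroup (FreeGroup (G ⊕ G)) :=
  Subgroup.map (jmap p) (Kp V p)

theorem Mfam_mono {p q : Idx G H} (hpq : p ≤ q) : Mfam V p ≤ Mfam V q := by
  have h1 : p.1.1 ≤ q.1.1 := hpq.1
  have h2 : p.1.2 ≤ q.1.2 := hpq.2
  have hcomp : jmap p = (jmap q).comp (fgm (Subgroup.inclusion h1)) := by
    rw [jmap, jmap, fgm_comp, Subgroup.subtype_comp_inclusion]
  rw [Mfam, Mfam, hcomp, ← Subgroup.map_map]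
  refine Subgroup.map_mono ?_
  refine (map_bigK_le V (Subgroup.inclusion h1) ?_)
  intro x hx
  rw [Subgroup.mem_comap] at hx ⊢
  exact h2 hx

theorem Mfam_directed : Directed (· ≤ ·) (Mfam V (G := G) (H := H)) := fun p q =>
  ⟨idxSup p q, Mfam_mono V (le_idxSup_left p q), Mfam_mono V (le_idxSup_right p q)⟩

end IsbellAux

namespace IsbellAux

open FreeGroup Subgroup

variable (V : GroupVariety.{u})
variable {G : Type u} [Group G] {H : Subgroup G}

open Classical in
/-- Retraction from the big doubled free group onto the one indexed by `p`. -/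
noncomputable def rmap (p : Idx G H) : FreeGroup (G ⊕ G) →* FreeGroup (↥p.1.1 ⊕ ↥p.1.1) :=
  FreeGroup.lift (fun x => Sum.elim
    (fun a => if h : a ∈ p.1.1 then of (Sum.inl (⟨a, h⟩ : ↥p.1.1)) else 1)
    (fun a => if h : a ∈ p.1.1 then of (Sum.inr (⟨a, h⟩ : ↥p.1.1)) else 1) x)

theorem rmap_of_inl (p : Idx G H) {a : G} (ha : a ∈ p.1.1) :
    rmap p (of (Sum.inl a)) = of (Sum.inl (⟨a, ha⟩ : ↥p.1.1)) := by
  rw [rmap, FreeGroup.lift_apply_of, Sum.elim_inl, dif_pos ha]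

theorem rmap_of_inr (p : Idx G H) {a : G} (ha : a ∈ p.1.1) :
    rmap p (of (Sum.inr a)) = of (Sum.inr (⟨a, ha⟩ : ↥p.1.1)) := by
  rw [rmap, FreeGroup.lift_apply_of, Sum.elim_inr, dif_pos ha]

theorem rmap_jmap (p : Idx G H) : (rmap p).comp (jmap p) = MonoidHom.id _ := by
  apply FreeGroup.ext_hom
  rintro (x | x)
  · simp [jmap, fgm_of_inl, rmap_of_inl p x.2, MonoidHom.id_apply]
  · simp [jmap, fgm_of_inr, rmap_of_inr p x.2, MonoidHom.id_apply]

/-- Letters whose component lies in `p.1.1`. -/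
def Ap (p : Idx G H) : Set (G ⊕ G) :=
  {x | Sum.elim (fun a => a ∈ p.1.1) (fun a => a ∈ p.1.1) x}

theorem Ap_mono {p q : Idx G H} (hpq : p ≤ q) : Ap p ⊆ Ap q := by
  rintro (x | x) hx
  · exact hpq.1 hx
  · exact hpq.1 hx

theorem jmap_rmap (p : Idx G H) {v : FreeGroup (G ⊕ G)}
    (hv : v ∈ Subgroup.closure (of '' Ap p)) : jmap p (rmap p v) = v := by
  induction hv using Subgroup.closure_induction with
  | mem w hw =>
    obtain ⟨x, hx, rfl⟩ := hw
    rcases x with a | a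
    · rw [rmap_of_inl p hx, jmap, fgm_of_inl]; rfl
    · rw [rmap_of_inr p hx, jmap, fgm_of_inr]; rfl
  | one => simp
  | mul x y hx hy ihx ihy => simp [_root_.map_mul, ihx, ihy]
  | inv x hx ihx => simp [_root_.map_inv, ihx]

theorem exists_finset_letters {α : Type u} (w : FreeGroup α) :
    ∃ T : Finset α, w ∈ Subgroup.closure (of '' ↑T) := by
  classical
  induction w using FreeGroup.induction_on with
  | C1 => exact ⟨∅, one_mem _⟩
  | of x => exact ⟨{x}, subset_closure ⟨x, by simp, rfl⟩⟩
  | inv_of x ih =>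
    obtain ⟨T, hT⟩ := ih
    exact ⟨T, inv_mem hT⟩
  | mul x y ihx ihy =>
    obtain ⟨T, hT⟩ := ihx
    obtain ⟨T', hT'⟩ := ihy
    refine ⟨T ∪ T', mul_mem ?_ ?_⟩
    · exact Subgroup.closure_mono (Set.image_mono (by simp)) hT
    · exact Subgroup.closure_mono (Set.image_mono (by simp)) hT'

theorem exists_idx_letters (w : FreeGroup (G ⊕ G)) :
    ∃ p : Idx G H, w ∈ Subgroup.closure (of '' Ap p) := by
  obtain ⟨T, hT⟩ := exists_finset_letters w
  have hfin : ((Sum.elim id id : G ⊕ G → G) '' ↑T).Finite :=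
    (T.finite_toSet).image _
  refine ⟨⟨(Subgroup.closure ((Sum.elim id id : G ⊕ G → G) '' ↑T), ⊥),
    (Subgroup.fg_iff _).2 ⟨_, rfl, hfin⟩, fg_bot' G, bot_le⟩, ?_⟩
  refine Subgroup.closure_mono (Set.image_mono ?_) hT
  rintro (a | a) ha
  · exact subset_closure ⟨Sum.inl a, ha, rfl⟩
  · exact subset_closure ⟨Sum.inr a, ha, rfl⟩

end IsbellAux

namespace IsbellAux

open FreeGroup Subgroup

variable (V : GroupVariety.{u})
variable {G : Type u} [Group G] {H : Subgroup G}

theorem iSup_Mfam_normal : (⨆ p : Idx G H, Mfam V p).Normal := by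
  constructor
  intro n hn g
  rw [Subgroup.mem_iSup_of_directed (Mfam_directed V)] at hn ⊢
  obtain ⟨p, hp⟩ := hn
  obtain ⟨p', hg⟩ := exists_idx_letters g
  set q := idxSup p p' with hq
  have hnq : n ∈ Mfam V q := Mfam_mono V (le_idxSup_left p p') hp
  obtain ⟨n', hn', rfl⟩ := hnq
  have hgq : g ∈ Subgroup.closure (of '' Ap q) :=
    Subgroup.closure_mono (Set.image_mono (Ap_mono (le_idxSup_right p p'))) hg
  have hfix : jmap q (rmap q g) = g := jmap_rmap q hgq
  refine ⟨q, rmap q g * n' * (rmap q g)⁻¹, ?_, ?_⟩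
  · exact (bigK_normal V _ _).conj_mem n' hn' _
  · simp only [_root_.map_mul, _root_.map_inv, hfix]

theorem rel_subset_iSup :
    Rel G ∪ SRel G H ⊆ ↑(⨆ p : Idx G H, Mfam V p) := by
  rintro w (⟨x, y, rfl | rfl⟩ | ⟨h', hh, rfl⟩)
  · have hx : x ∈ Subgroup.closure ({x, y} : Set G) := subset_closure (by simp)
    have hy : y ∈ Subgroup.closure ({x, y} : Set G) := subset_closure (by simp)
    set p : Idx G H := ⟨(Subgroup.closure {x, y}, ⊥),
      (Subgroup.fg_iff _).2 ⟨_, rfl, (Set.finite_singleton _).insert _⟩,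
      fg_bot' G, bot_le⟩ with hpdef
    refine le_iSup (Mfam V) p ⟨of (Sum.inl (⟨x, hx⟩ : ↥p.1.1)) * of (Sum.inl (⟨y, hy⟩ : ↥p.1.1)) *
        (of (Sum.inl (⟨x, hx⟩ * ⟨y, hy⟩ : ↥p.1.1)))⁻¹, ?_, ?_⟩
    · exact (le_sup_left : Subgroup.normalClosure _ ≤ Kp V p)
        (subset_normalClosure (Or.inl ⟨_, _, Or.inl rfl⟩))
    · simp only [jmap, _root_.map_mul, _root_.map_inv, fgm_of_inl]
      rfl
  · have hx : x ∈ Subgroup.closure ({x, y} : Set G) := subset_closure (by simp)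
    have hy : y ∈ Subgroup.closure ({x, y} : Set G) := subset_closure (by simp)
    set p : Idx G H := ⟨(Subgroup.closure {x, y}, ⊥),
      (Subgroup.fg_iff _).2 ⟨_, rfl, (Set.finite_singleton _).insert _⟩,
      fg_bot' G, bot_le⟩ with hpdef
    refine le_iSup (Mfam V) p ⟨of (Sum.inr (⟨x, hx⟩ : ↥p.1.1)) * of (Sum.inr (⟨y, hy⟩ : ↥p.1.1)) *
        (of (Sum.inr (⟨x, hx⟩ * ⟨y, hy⟩ : ↥p.1.1)))⁻¹, ?_, ?_⟩
    · exact (le_sup_left : Subgroup.normalClosure _ ≤ Kp V p)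
        (subset_normalClosure (Or.inl ⟨_, _, Or.inr rfl⟩))
    · simp only [jmap, _root_.map_mul, _root_.map_inv, fgm_of_inr]
      rfl
  · have hmem : h' ∈ Subgroup.closure ({h'} : Set G) := subset_closure rfl
    set p : Idx G H := ⟨(Subgroup.closure {h'}, Subgroup.closure {h'}),
      (Subgroup.fg_iff _).2 ⟨_, rfl, Set.finite_singleton _⟩,
      (Subgroup.fg_iff _).2 ⟨_, rfl, Set.finite_singleton _⟩,
      (Subgroup.closure_le _).2 (by simpa using hh)⟩ with hpdef
    refine le_iSup (Mfam V) p
      ⟨of (Sum.inl (⟨h', hmem⟩ : ↥p.1.1)) * (of (Sum.inr (⟨h', hmem⟩ : ↥p.1.1)))⁻¹, ?_, ?_⟩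
    · refine (le_sup_left : Subgroup.normalClosure _ ≤ Kp V p)
        (subset_normalClosure (Or.inr ⟨⟨h', hmem⟩, ?_, rfl⟩))
      exact hmem
    · simp only [jmap, _root_.map_mul, _root_.map_inv, fgm_of_inl, fgm_of_inr]
      rfl

theorem verbal_le_iSup :
    verbalSubgroup V (FreeGroup (G ⊕ G)) ≤ ⨆ p : Idx G H, Mfam V p := by
  intro v hv
  obtain ⟨p, hvp⟩ := exists_idx_letters (H := H) v
  have hfix : jmap p (rmap p v) = v := jmap_rmap p hvp
  have h1 : rmap p v ∈ verbalSubgroup V (FreeGroup (↥p.1.1 ⊕ ↥p.1.1)) :=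
    map_verbal_le V (rmap p) (Subgroup.mem_map_of_mem _ hv)
  have h2 : rmap p v ∈ Kp V p := (le_sup_right : _ ≤ Kp V p) h1
  exact le_iSup (Mfam V) p ⟨rmap p v, h2, hfix⟩

theorem bigK_le_iSup : bigK V G H ≤ ⨆ p : Idx G H, Mfam V p := by
  haveI := iSup_Mfam_normal V (G := G) (H := H)
  rw [bigK]
  exact sup_le (normalClosure_le_normal (rel_subset_iSup V)) (verbal_le_iSup V)

end IsbellAux

namespace IsbellAux

open FreeGroup Subgroup

variable {G : Type u} [Group G]

theorem comap_subtype_fg {A B : Subgroup G} (hBA : B ≤ A) (hB : B.FG) :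
    (Subgroup.comap A.subtype B).FG := by
  obtain ⟨S, hS, hSf⟩ := (Subgroup.fg_iff _).1 hB
  have hSA : S ⊆ ↑A := fun x hx => hBA (hS ▸ subset_closure hx)
  set S' : Set ↥A := (fun x : ↥A => (x : G)) ⁻¹' S with hS'
  have hfin : S'.Finite := hSf.preimage (Subtype.coe_injective.injOn)
  have himg : A.subtype '' S' = S := by
    have hr : Set.range A.subtype = ↑A := by
      ext x; simp [Subgroup.coe_subtype, Subtype.range_coe]
    exact Set.image_preimage_eq_of_subset (by rw [hr]; exact hSA)
  have hmap : Subgroup.map A.subtype (Subgroup.closure S') = B := by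
    rw [MonoidHom.map_closure, himg, hS]
  rw [Subgroup.fg_iff]
  refine ⟨S', ?_, hfin⟩
  rw [← hmap, Subgroup.comap_map_eq_self_of_injective A.subtype_injective]

end IsbellAux

open IsbellAux FreeGroup Subgroup in
theorem stmt14 (𝒱 : GroupVariety.{u}) (h : HasNontrivialDominions 𝒱.Mem) :
    ∃ (G : GroupT.{u}) (H : Subgroup G.carrier),
      𝒱.Mem G ∧ Group.FG G.carrier ∧ H.FG ∧
      (H : Set G.carrier) ⊂ dominion 𝒱.Mem G.carrier H := by
  obtain ⟨Gt, Hb, hGmem, hss⟩ := h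
  obtain ⟨a, haD, haH⟩ := Set.not_subset.1 hss.2
  have hw := bigK_of_mem_dominion 𝒱 haD
  have h2 := bigK_le_iSup 𝒱 hw
  rw [Subgroup.mem_iSup_of_directed (Mfam_directed 𝒱)] at h2
  obtain ⟨p, hp⟩ := h2
  have hfga : (Subgroup.closure ({a} : Set Gt.carrier)).FG :=
    (Subgroup.fg_iff _).2 ⟨_, rfl, Set.finite_singleton _⟩
  set paux : Idx Gt.carrier Hb := ⟨(Subgroup.closure {a} ⊔ p.1.2, p.1.2),
    fg_sup' _ hfga p.2.2.1, p.2.2.1, p.2.2.2⟩ with hpaux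
  set q := idxSup p paux with hqdef
  have ha1 : a ∈ q.1.1 := by
    have h0 : a ∈ Subgroup.closure ({a} : Set Gt.carrier) := subset_closure rfl
    have h1 : a ∈ paux.1.1 := (le_sup_left : Subgroup.closure {a} ≤ paux.1.1) h0
    exact (le_sup_right : paux.1.1 ≤ q.1.1) h1
  have hq : of (Sum.inl a) * (of (Sum.inr a))⁻¹ ∈ Mfam 𝒱 q :=
    Mfam_mono 𝒱 (le_idxSup_left p paux) hp
  obtain ⟨z, hz, hjz⟩ := hq
  have hzeq : z = of (Sum.inl (⟨a, ha1⟩ : ↥q.1.1)) * (of (Sum.inr (⟨a, ha1⟩ : ↥q.1.1)))⁻¹ := by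
    have hid : rmap q (jmap q z) = z := by
      have := DFunLike.congr_fun (rmap_jmap q) z
      simpa using this
    rw [hjz] at hid
    rw [← hid, _root_.map_mul, _root_.map_inv, rmap_of_inl q ha1, rmap_of_inr q ha1]
  rw [hzeq] at hz
  have hdom : (⟨a, ha1⟩ : ↥q.1.1) ∈
      dominion 𝒱.Mem ↥q.1.1 (Subgroup.comap q.1.1.subtype q.1.2) :=
    mem_dominion_of_bigK 𝒱 hz
  have hle21 : q.1.2 ≤ q.1.1 := by
    refine sup_le ?_ ?_ <;>
      exact le_trans le_sup_right (le_sup_right : paux.1.1 ≤ q.1.1)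
  have hHfg : (Subgroup.comap q.1.1.subtype q.1.2).FG := comap_subtype_fg hle21 q.2.2.1
  have hnotin : (⟨a, ha1⟩ : ↥q.1.1) ∉ Subgroup.comap q.1.1.subtype q.1.2 := by
    intro hmem
    exact haH (q.2.2.2 hmem)
  refine ⟨⟨↥q.1.1⟩, Subgroup.comap q.1.1.subtype q.1.2,
    𝒱.subgroup_closed Gt q.1.1 hGmem, (Group.fg_iff_subgroup_fg q.1.1).2 q.2.1, hHfg, ?_⟩
  rw [Set.ssubset_def]
  constructor
  · intro x hx K hK f g hfg
    exact hfg x hx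
  · intro hcon
    exact hnotin (hcon hdom)
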